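/- Define e₋₁ : Λ₊ → ℂ by e₋₁(z) = (−i)^{Im z} if Re z = 0 and e₋₁(z) = 0 if Re z > 0. Then e₋₁ is discrete analytic on Λ₊, is not identically zero, and satisfies (δ_x e₋₁)(z) = −e₋₁(z) for every z ∈ Λ₊; hence −1 is an eigenvalue of δ_x acting on the space of ℂ-valued discrete analytic functions on the right half-lattice Λ₊ (in contrast with the full lattice Λ, where −1 is not an eigenvalue). -/

import Mathlib

open Complex

noncomputable section

/-- The Gaussian integer lattice Λ = ℤ + iℤ. -/
abbrev GI := GaussianInt

/-- The lattice element i. -/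
def Ii : GI := ⟨0, 1⟩

/-- The right half-lattice Λ₊ = {z ∈ Λ : Re z ≥ 0}. -/
def Lp := {z : GI // 0 ≤ z.re}

/-- The point 0 of Λ₊. -/
def pt0 : Lp := ⟨0, le_refl 0⟩

/-- The shift z ↦ z + 1 on Λ₊. -/
def shx (z : Lp) : Lp := ⟨z.1 + 1, by have := z.2; simp [Zsqrtd.re_add]; omega⟩

/-- The shift z ↦ z + i on Λ₊. -/
def shy (z : Lp) : Lp := ⟨z.1 + Ii, by have := z.2; simp [Zsqrtd.re_add, Ii]; omega⟩

/-- α₊ = (1+i)/2. -/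
def ap : ℂ := (1 + I) / 2

/-- α₋ = (1−i)/2. -/
def am : ℂ := (1 - I) / 2

/-- The difference operator δ_x on functions on Λ₊. -/
def dxp (f : Lp → ℂ) : Lp → ℂ := fun z => f (shx z) - f z

/-- The difference operator δ_y on functions on Λ₊. -/
def dyp (f : Lp → ℂ) : Lp → ℂ := fun z => f (shy z) - f z

/-- Discrete analyticity on the right half-lattice Λ₊. -/
def DAp (f : Lp → ℂ) : Prop :=
  ∀ z : Lp, (f (shx (shy z)) - f z) / (1 + I) = (f (shx z) - f (shy z)) / (1 - I)

/-- The difference operator δ_x on the full lattice. -/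
def dx (f : GI → ℂ) : GI → ℂ := fun z => f (z + 1) - f z

/-- Discrete analyticity on the full lattice Λ. -/
def DA (f : GI → ℂ) : Prop :=
  ∀ z : GI, (f (z + 1 + Ii) - f z) / (1 + I) = (f (z + 1) - f (z + Ii)) / (1 - I)

/-- e₋₁(z) = (−i)^{Im z} if Re z = 0, and 0 if Re z > 0. -/
def eMinusOne : Lp → ℂ := fun z => if z.1.re = 0 then (-I) ^ z.1.im else 0

/-- e₋₁ is discrete analytic on Λ₊, not identically zero, and
δ_x e₋₁ = −e₋₁; hence −1 is an eigenvalue of δ_x on the discrete analytic functions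
on Λ₊, in contrast with the full lattice Λ, where −1 is not an eigenvalue. -/

lemma eM_shx (z : Lp) : eMinusOne (shx z) = 0 := by
  have hz := z.2
  simp only [eMinusOne, shx]
  apply if_neg
  simp [Zsqrtd.re_add]; omega

lemma eM_shy (z : Lp) (h : z.1.re = 0) :
    eMinusOne (shy z) = (-I) ^ z.1.im * (-I) := by
  have : (z.1 + Ii).re = 0 := by simp [Zsqrtd.re_add, Ii, h]
  simp only [eMinusOne, shy, this, if_pos]
  have him : (z.1 + Ii).im = z.1.im + 1 := by simp [Zsqrtd.im_add, Ii]
  rw [him, zpow_add_one₀ (by simp [I_ne_zero] : (-I : ℂ) ≠ 0)]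

lemma eM_shy' (z : Lp) (h : z.1.re ≠ 0) : eMinusOne (shy z) = 0 := by
  simp only [eMinusOne, shy]
  apply if_neg
  simp [Zsqrtd.re_add, Ii, h]

theorem stmt9 :
    DAp eMinusOne ∧
    eMinusOne ≠ 0 ∧
    (∀ z : Lp, dxp eMinusOne z = -eMinusOne z) ∧
    ¬ ∃ f : GI → ℂ, DA f ∧ f ≠ 0 ∧ ∀ z : GI, dx f z = -f z := by
  have h1 : (1 + I : ℂ) ≠ 0 := by
    intro h; have := congrArg Complex.im h; simp at this
  have h2 : (1 - I : ℂ) ≠ 0 := by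
    intro h; have := congrArg Complex.im h; simp at this
  refine ⟨?_, ?_, ?_, ?_⟩
  · intro z
    rw [eM_shx (shy z), eM_shx z]
    by_cases h : z.1.re = 0
    · rw [eM_shy z h]
      simp only [eMinusOne, h, if_pos]
      field_simp
      linear_combination (-(-I : ℂ) ^ z.1.im) * I_sq
    · rw [eM_shy' z h]
      simp only [eMinusOne, h, if_neg, ite_eq_right_iff]
      simp [h]
  · intro h
    have := congrFun h pt0
    simp [eMinusOne, pt0] at this
  · intro z
    simp [dxp, eM_shx z]
  · rintro ⟨f, _, hne, hd⟩
    apply hne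
    funext w
    have h := hd (w - 1)
    simp only [dx] at h
    have : f (w - 1 + 1) = 0 := by linear_combination h
    simpa using this
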